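/- Transferring weight from a lighter product to a heavier product cannot decrease the expected maximum load: for every T ∈ ℕ, every vector of positive weights (w_1,…,w_k) with w_1 ≥ w_2, and every δ ∈ [0, w_2], one has E_T((w_1 + δ, w_2 − δ, w_3,…,w_k)) ≥ E_T((w_1,…,w_k)). -/

import Mathlib

open Finset

/-- MNL choice probability for a single customer offered products with weights `w`:
outcome `some i` (select product `i`) has probability `w i / (1 + ∑ j, w j)`, and
outcome `none` (no purchase) has probability `1 / (1 + ∑ j, w j)`. -/
noncomputable def mnlProb {k : ℕ} (w : Fin k → ℝ) : Option (Fin k) → ℝ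
  | none => 1 / (1 + ∑ j, w j)
  | some i => w i / (1 + ∑ j, w j)

/-- The load of product `i`: the number of customers `t` selecting product `i`,
given the outcome `f` of the `T` customers' choices. -/
def loadCount {k T : ℕ} (f : Fin T → Option (Fin k)) (i : Fin k) : ℕ :=
  (Finset.univ.filter fun t => f t = some i).card

/-- `ET T k w` is the expected maximum load when products with weights `w 0, …, w (k-1)`
are statically offered to `T` customers making independent MNL choices; the loads form
a multinomial random vector. -/
noncomputable def ET (T k : ℕ) (w : Fin k → ℝ) : ℝ :=
  ∑ f : Fin T → Option (Fin k),
    (∏ t, mnlProb w (f t)) * ((Finset.univ.sup (loadCount f) : ℕ) : ℝ)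



private lemma choose_mul_id1 (m j : ℕ) (hj : 1 ≤ j) (hjm : j ≤ m) :
    m.choose j * j = m * (m-1).choose (j-1) := by
  obtain ⟨m, rfl⟩ : ∃ n, m = n + 1 := ⟨m - 1, by omega⟩
  obtain ⟨j, rfl⟩ : ∃ n, j = n + 1 := ⟨j - 1, by omega⟩
  simp only [Nat.add_sub_cancel]
  rw [← Nat.add_one_mul_choose_eq]

private lemma choose_mul_id2 (m j : ℕ) (hm : 1 ≤ m) :
    m.choose j * (m - j) = m * (m-1).choose j := by
  rcases le_or_gt m j with h | h
  · have h0 : (m-1).choose j = 0 := Nat.choose_eq_zero_of_lt (by omega)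
    rw [Nat.sub_eq_zero_of_le h, h0, mul_zero, mul_zero]
  · rw [← Nat.choose_symm (le_of_lt h)]
    have h2 : 1 ≤ m - j := by omega
    have h3 : m - j ≤ m := by omega
    rw [choose_mul_id1 m (m - j) h2 h3]
    congr 1
    rw [← Nat.choose_symm (by omega : m - j - 1 ≤ m - 1)]
    congr 1
    omega

private noncomputable def gfun (m : ℕ) (s : ℝ) (j : ℕ) (x : ℝ) : ℝ :=
  (m : ℝ) * ((m-1).choose j) * x^j * (s-x)^(m-1-j)

private noncomputable def hfun (m : ℕ) (s : ℝ) (j : ℕ) (x : ℝ) : ℝ :=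
  if j = 0 then 0 else gfun m s (j-1) x

private lemma hasDerivAt_term (m j : ℕ) (hj : j ≤ m) (hm : 1 ≤ m) (s x : ℝ) :
    HasDerivAt (fun x => (m.choose j : ℝ) * x^j * (s-x)^(m-j))
      (hfun m s j x - gfun m s j x) x := by
  have hx : HasDerivAt (fun x : ℝ => x ^ j) ((j:ℝ) * x^(j-1)) x := hasDerivAt_pow j x
  have hy0 : HasDerivAt (fun x : ℝ => s - x) (-1) x := by
    simpa using (hasDerivAt_id' x).const_sub s
  have hy : HasDerivAt (fun x : ℝ => (s - x)^(m-j))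
      ((((m-j : ℕ)):ℝ) * (s-x)^(m-j-1) * (-1)) x := hy0.pow (m-j)
  have h := ((hx.mul hy).const_mul ((m.choose j : ℝ)))
  have harr : (fun x : ℝ => (m.choose j : ℝ) * x^j * (s-x)^(m-j))
      = (fun y : ℝ => (m.choose j : ℝ) * (y ^ j * (s - y) ^ (m - j))) := by
    funext y; ring
  rw [harr]
  refine h.congr_deriv ?_
  symm
  unfold hfun gfun
  rcases Nat.eq_zero_or_pos j with rfl | hj1
  · rw [if_pos rfl]
    simp only [Nat.choose_zero_right, Nat.sub_zero, Nat.cast_zero, Nat.cast_one, pow_zero]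
    push_cast
    ring
  · rw [if_neg (by omega : j ≠ 0)]
    have c1 : (m.choose j : ℝ) * (j : ℝ) = (m : ℝ) * ((m-1).choose (j-1) : ℝ) := by
      exact_mod_cast congrArg (Nat.cast : ℕ → ℝ) (choose_mul_id1 m j hj1 hj)
    have c2 : (m.choose j : ℝ) * (((m-j):ℕ) : ℝ) = (m : ℝ) * ((m-1).choose j : ℝ) := by
      exact_mod_cast congrArg (Nat.cast : ℕ → ℝ) (choose_mul_id2 m j hm)
    have e1 : m - 1 - (j - 1) = m - j := by omega
    have e2 : m - 1 - j = m - j - 1 := by omega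
    rw [e1, e2]
    linear_combination (-(x^(j-1)*(s-x)^(m-j))) * c1 + (x^j*(s-x)^(m-j-1)) * c2

private lemma hasDerivAt_S (m r : ℕ) (hrm : m ≤ 2*r) (hr : r < m) (s x : ℝ) :
    HasDerivAt (fun x => ∑ j ∈ Finset.range (m+1),
        if r < j ∨ j + r < m then (m.choose j : ℝ) * x^j * (s-x)^(m-j) else 0)
      (gfun m s r x - gfun m s (m-r-1) x) x := by
  have hstep : ∀ j ∈ Finset.range (m+1), HasDerivAt
      (fun x : ℝ => if r < j ∨ j + r < m then (m.choose j : ℝ) * x^j * (s-x)^(m-j) else 0)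
      (if r < j ∨ j + r < m then hfun m s j x - gfun m s j x else 0) x := by
    intro j hj
    by_cases hc : r < j ∨ j + r < m
    · simp only [if_pos hc]
      exact hasDerivAt_term m j (by simp at hj; omega) (by omega) s x
    · simp only [if_neg hc]
      exact hasDerivAt_const x 0
  have h := HasDerivAt.fun_sum hstep
  refine h.congr_deriv ?_
  symm
  rw [← Finset.sum_filter]
  have hset : (Finset.range (m+1)).filter (fun j => r < j ∨ j + r < m)
      = Finset.range (m-r) ∪ Finset.Ico (r+1) (m+1) := by
    ext j
    simp only [Finset.mem_filter, Finset.mem_range, Finset.mem_union, Finset.mem_Ico]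
    omega
  have hdisj : Disjoint (Finset.range (m-r)) (Finset.Ico (r+1) (m+1)) := by
    rw [Finset.disjoint_left]
    intro j hj1 hj2
    simp only [Finset.mem_range] at hj1
    simp only [Finset.mem_Ico] at hj2
    omega
  rw [hset, Finset.sum_union hdisj]
  have h1 : ∑ j ∈ Finset.range (m-r), (hfun m s j x - gfun m s j x)
      = - gfun m s (m-r-1) x := by
    have hgh : ∀ j, gfun m s j x = hfun m s (j+1) x := by
      intro j; unfold hfun; rw [if_neg (by omega)]; simp
    calc ∑ j ∈ Finset.range (m-r), (hfun m s j x - gfun m s j x)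
        = ∑ j ∈ Finset.range (m-r), (hfun m s j x - hfun m s (j+1) x) :=
          Finset.sum_congr rfl fun j _ => by rw [hgh j]
      _ = hfun m s 0 x - hfun m s (m-r) x := Finset.sum_range_sub' (fun j => hfun m s j x) (m-r)
      _ = - gfun m s (m-r-1) x := by
          unfold hfun
          rw [if_pos rfl, if_neg (by omega : ¬ (m - r = 0))]
          ring
  have h2 : ∑ j ∈ Finset.Ico (r+1) (m+1), (hfun m s j x - gfun m s j x)
      = gfun m s r x := by
    rw [Finset.sum_Ico_eq_sum_range]
    have hmr : m + 1 - (r+1) = m - r := by omega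
    rw [hmr]
    have hterm : ∀ i, hfun m s (r+1+i) x - gfun m s (r+1+i) x
        = gfun m s (r+i) x - gfun m s (r+(i+1)) x := by
      intro i
      unfold hfun
      rw [if_neg (by omega)]
      have e1 : r + 1 + i - 1 = r + i := by omega
      rw [e1]
      have e2 : r + (i+1) = r + 1 + i := by omega
      rw [e2]
    calc ∑ i ∈ Finset.range (m-r), (hfun m s (r+1+i) x - gfun m s (r+1+i) x)
        = ∑ i ∈ Finset.range (m-r), (gfun m s (r+i) x - gfun m s (r+(i+1)) x) :=
          Finset.sum_congr rfl fun i _ => hterm i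
      _ = gfun m s (r+0) x - gfun m s (r+(m-r)) x :=
          Finset.sum_range_sub' (fun i => gfun m s (r+i) x) (m-r)
      _ = gfun m s r x := by
          have e3 : r + (m-r) = m := by omega
          rw [e3, Nat.add_zero]
          have hz : gfun m s m x = 0 := by
            unfold gfun
            rw [Nat.choose_eq_zero_of_lt (by omega : m - 1 < m)]
            simp
          rw [hz]; ring
  rw [h1, h2]; ring

private lemma tail_mono (m r : ℕ) (hrm : m ≤ 2*r) (s : ℝ) (hs : 0 ≤ s) :
    MonotoneOn (fun x => ∑ j ∈ Finset.range (m+1),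
        if r < j ∨ j + r < m then (m.choose j : ℝ) * x^j * (s-x)^(m-j) else 0)
      (Set.Icc (s/2) s) := by
  rcases le_or_gt m r with hmr | hr
  · have hz : ∀ x : ℝ, (∑ j ∈ Finset.range (m+1),
        if r < j ∨ j + r < m then (m.choose j : ℝ) * x^j * (s-x)^(m-j) else 0) = 0 := by
      intro x
      refine Finset.sum_eq_zero fun j hj => ?_
      rw [if_neg]
      simp only [Finset.mem_range] at hj
      omega
    intro a _ b _ _
    simp only [hz]
    exact le_refl 0
  · have hF : ∀ x : ℝ, HasDerivAt (fun x => ∑ j ∈ Finset.range (m+1),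
        if r < j ∨ j + r < m then (m.choose j : ℝ) * x^j * (s-x)^(m-j) else 0)
        (gfun m s r x - gfun m s (m-r-1) x) x := fun x => hasDerivAt_S m r hrm hr s x
    apply monotoneOn_of_deriv_nonneg (convex_Icc _ _)
    · exact fun x _ => (hF x).continuousAt.continuousWithinAt
    · exact fun x _ => ((hF x).differentiableAt).differentiableWithinAt
    · intro x hx
      rw [interior_Icc] at hx
      rw [(hF x).deriv, sub_nonneg]
      have hx0 : 0 ≤ x := le_trans (by linarith [hx.1]) (le_of_lt hx.1)
      have hsx0 : 0 ≤ s - x := by linarith [hx.2]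
      have hsx : s - x ≤ x := by linarith [hx.1]
      unfold gfun
      rw [show m - r - 1 = m - 1 - r from by omega]
      have hcc : (m-1).choose (m-1-r) = (m-1).choose r := by
        rw [Nat.choose_symm (by omega : r ≤ m - 1)]
      have he1 : m - 1 - (m - 1 - r) = r := by omega
      rw [hcc, he1]
      set e := m - 1 - r with he
      have her : e ≤ r := by omega
      have hxr : x ^ r = x ^ e * x ^ (r-e) := by rw [← pow_add]; congr 1; omega
      have hsr : (s-x) ^ r = (s-x) ^ e * (s-x) ^ (r-e) := by rw [← pow_add]; congr 1; omega
      have h2 : (m:ℝ) * ((m-1).choose r) * x ^ e * (s-x) ^ e * (s-x) ^ (r-e)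
          ≤ (m:ℝ) * ((m-1).choose r) * x ^ e * (s-x) ^ e * x ^ (r-e) :=
        mul_le_mul_of_nonneg_left (pow_le_pow_left₀ hsx0 hsx (r-e)) (by positivity)
      calc (m:ℝ) * ((m-1).choose r) * x ^ e * (s-x) ^ r
          = (m:ℝ) * ((m-1).choose r) * x ^ e * (s-x) ^ e * (s-x) ^ (r-e) := by
            rw [hsr]; ring
        _ ≤ (m:ℝ) * ((m-1).choose r) * x ^ e * (s-x) ^ e * x ^ (r-e) := h2
        _ = (m:ℝ) * ((m-1).choose r) * x ^ r * (s-x) ^ e := by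
            rw [hxr]; ring

private lemma nat_as_ind (N n : ℕ) (h : n ≤ N) :
    (n : ℝ) = ∑ r ∈ Finset.range N, if r < n then (1:ℝ) else 0 := by
  rw [Finset.sum_boole]
  have : (Finset.range N).filter (fun r => r < n) = Finset.range n := by
    ext r
    simp only [Finset.mem_filter, Finset.mem_range]
    omega
  rw [this, Finset.card_range]

private lemma core (m M : ℕ) (a b δ : ℝ) (h0 : 0 ≤ δ) (hδb : δ ≤ b) (hba : b ≤ a) :
    ∑ j ∈ Finset.range (m+1),
        (m.choose j : ℝ) * a^j * b^(m-j) * ((max M (max j (m-j)) : ℕ) : ℝ)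
      ≤ ∑ j ∈ Finset.range (m+1),
        (m.choose j : ℝ) * (a+δ)^j * (b-δ)^(m-j) * ((max M (max j (m-j)) : ℕ) : ℝ) := by
  set N := max M m with hN
  have expand : ∀ u v : ℝ, ∑ j ∈ Finset.range (m+1),
      (m.choose j : ℝ) * u^j * v^(m-j) * ((max M (max j (m-j)) : ℕ) : ℝ)
      = ∑ r ∈ Finset.range N, ∑ j ∈ Finset.range (m+1),
          (if r < max M (max j (m-j)) then (m.choose j : ℝ) * u^j * v^(m-j) else 0) := by
    intro u v
    rw [Finset.sum_comm]
    refine Finset.sum_congr rfl fun j hj => ?_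
    simp only [Finset.mem_range] at hj
    have hle : max M (max j (m-j)) ≤ N :=
      max_le (le_max_left _ _)
        (le_trans (max_le (by omega) (by omega)) (le_max_right M m))
    rw [nat_as_ind N _ hle, Finset.mul_sum]
    refine Finset.sum_congr rfl fun r _ => ?_
    rw [mul_ite, mul_one, mul_zero]
  rw [expand a b, expand (a+δ) (b-δ)]
  apply Finset.sum_le_sum
  intro r _
  by_cases hcase : r < M ∨ 2*r < m
  · have hall : ∀ j ∈ Finset.range (m+1), r < max M (max j (m-j)) := by
      intro j hj
      simp only [Finset.mem_range] at hj
      rcases hcase with h | h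
      · exact lt_of_lt_of_le h (le_max_left _ _)
      · rcases le_or_gt j r with hjr | hjr
        · exact lt_of_lt_of_le (by omega : r < m - j)
            (le_trans (le_max_right j _) (le_max_right M _))
        · exact lt_of_lt_of_le hjr (le_trans (le_max_left j _) (le_max_right M _))
    have he : ∀ u v : ℝ, ∑ j ∈ Finset.range (m+1),
        (if r < max M (max j (m-j)) then (m.choose j : ℝ) * u^j * v^(m-j) else 0)
        = (u + v)^m := by
      intro u v
      rw [add_pow]
      refine Finset.sum_congr rfl fun j hj => ?_
      rw [if_pos (hall j hj)]
      ring
    rw [he a b, he (a+δ) (b-δ)]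
    have : a + δ + (b - δ) = a + b := by ring
    rw [this]
  · push_neg at hcase
    obtain ⟨hM, hm2⟩ := hcase
    have hiff : ∀ j, (r < max M (max j (m-j))) ↔ (r < j ∨ j + r < m) := by
      intro j
      rw [lt_max_iff, lt_max_iff]
      omega
    have hrw : ∀ u v : ℝ, ∑ j ∈ Finset.range (m+1),
        (if r < max M (max j (m-j)) then (m.choose j : ℝ) * u^j * v^(m-j) else 0)
        = ∑ j ∈ Finset.range (m+1),
          (if r < j ∨ j + r < m then (m.choose j : ℝ) * u^j * v^(m-j) else 0) := by
      intro u v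
      exact Finset.sum_congr rfl fun j _ => if_congr (hiff j) rfl rfl
    rw [hrw a b, hrw (a+δ) (b-δ)]
    have hs0 : (0:ℝ) ≤ a + b := by linarith
    have hmem1 : a ∈ Set.Icc ((a+b)/2) (a+b) := by
      constructor <;> [linarith; linarith]
    have hmem2 : a + δ ∈ Set.Icc ((a+b)/2) (a+b) := by
      constructor <;> [linarith; linarith]
    have hmono := tail_mono m r (by omega) (a+b) hs0 hmem1 hmem2 (by linarith)
    simp only [] at hmono
    rw [show a + b - a = b from by ring, show a + b - (a+δ) = b - δ from by ring] at hmono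
    exact hmono

private def collapse {k : ℕ} : Option (Fin (k+2)) → Option (Fin (k+2))
  | none => none
  | some i => if i = 1 then some 0 else some i

private def others (k : ℕ) : Finset (Fin (k+2)) := (Finset.univ.erase 0).erase 1

private lemma collapse_ne_one {k : ℕ} (y : Option (Fin (k+2))) : collapse y ≠ some 1 := by
  rcases y with _ | i
  · simp [collapse]
  · by_cases h : i = 1 <;> simp [collapse, h]

private lemma collapse_eq_self {k : ℕ} (y : Option (Fin (k+2))) (h0 : y ≠ some 0)
    (h1 : y ≠ some 1) : collapse y = y := by
  rcases y with _ | i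
  · simp [collapse]
  · have : i ≠ 1 := fun h => h1 (by rw [h])
    simp [collapse, this]

private lemma fiber_sum (T k : ℕ) (q : Option (Fin (k+2)) → ℝ)
    (g : Fin T → Option (Fin (k+2))) (hg : ∀ t, g t ≠ some 1) :
    ∑ f ∈ Finset.univ.filter
        (fun f : Fin T → Option (Fin (k+2)) => collapse ∘ f = g),
      (∏ t, q (f t)) * ((Finset.univ.sup (loadCount f) : ℕ) : ℝ)
    = ∑ B ∈ (Finset.univ.filter (fun t => g t = some 0)).powerset,
        (∏ t ∈ (Finset.univ.filter (fun t => g t = some 0))ᶜ, q (g t)) *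
        (q (some 0) ^ B.card
          * q (some 1) ^ ((Finset.univ.filter (fun t => g t = some 0)).card - B.card)
          * ((max ((others k).sup (loadCount g))
              (max B.card ((Finset.univ.filter (fun t => g t = some 0)).card - B.card)) : ℕ) : ℝ)) := by
  set A : Finset (Fin T) := Finset.univ.filter (fun t => g t = some 0) with hA
  have hmemA : ∀ t, t ∈ A ↔ g t = some 0 := by
    intro t; rw [hA]; simp
  have h01 : (some 0 : Option (Fin (k+2))) ≠ some 1 := by simp
  refine (Finset.sum_bij'
    (i := fun (B : Finset (Fin T)) (_ : B ∈ A.powerset) =>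
      (fun t => if t ∈ B then some 0 else if t ∈ A then some 1 else g t :
        Fin T → Option (Fin (k+2))))
    (j := fun (f : Fin T → Option (Fin (k+2))) (_ : f ∈ _) =>
      Finset.univ.filter (fun t => f t = some 0))
    ?_ ?_ ?_ ?_ ?_).symm
  · -- hi : fB lands in fiber
    intro B hB
    rw [Finset.mem_powerset] at hB
    simp only [Finset.mem_filter, Finset.mem_univ, true_and]
    funext t
    simp only [Function.comp_apply]
    by_cases ht : t ∈ B
    · rw [if_pos ht]
      have : g t = some 0 := (hmemA t).1 (hB ht)
      simp [collapse, this]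
    · rw [if_neg ht]
      by_cases ht2 : t ∈ A
      · rw [if_pos ht2]
        have : g t = some 0 := (hmemA t).1 ht2
        rw [this]
        simp [collapse]
      · rw [if_neg ht2]
        exact collapse_eq_self _ (fun h => ht2 ((hmemA t).2 h)) (hg t)
  · -- hj : B_f ∈ powerset
    intro f hf
    simp only [Finset.mem_filter, Finset.mem_univ, true_and] at hf
    rw [Finset.mem_powerset]
    intro t ht
    simp only [Finset.mem_filter, Finset.mem_univ, true_and] at ht
    rw [hmemA]
    have hct := congrFun hf t
    simp only [Function.comp_apply] at hct
    rw [ht] at hct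
    simpa [collapse] using hct.symm
  · -- left_inv : B (fB) = B
    intro B hB
    rw [Finset.mem_powerset] at hB
    ext t
    simp only [Finset.mem_filter, Finset.mem_univ, true_and]
    by_cases ht : t ∈ B
    · simp [ht]
    · rw [if_neg ht]
      by_cases ht2 : t ∈ A
      · rw [if_pos ht2]
        constructor
        · intro h; exact absurd h.symm h01
        · intro h; exact absurd h ht
      · rw [if_neg ht2]
        constructor
        · intro h; exact absurd ((hmemA t).2 h) ht2
        · intro h; exact absurd h ht
  · -- right_inv : f (B f) = f
    intro f hf
    simp only [Finset.mem_filter, Finset.mem_univ, true_and] at hf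
    funext t
    have hct := congrFun hf t
    simp only [Function.comp_apply] at hct
    by_cases h0 : f t = some 0
    · rw [if_pos (by simp only [Finset.mem_filter, Finset.mem_univ, true_and]; exact h0)]
      exact h0.symm
    · rw [if_neg (by simp only [Finset.mem_filter, Finset.mem_univ, true_and]; exact h0)]
      by_cases h1 : f t = some 1
      · rw [if_pos]
        · exact h1.symm
        · rw [hmemA, ← hct, h1]
          simp [collapse]
      · rw [if_neg]
        · rw [← hct, collapse_eq_self _ h0 h1]
        · rw [hmemA, ← hct, collapse_eq_self _ h0 h1]
          exact h0
  · -- values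
    intro B hB
    rw [Finset.mem_powerset] at hB
    set fB : Fin T → Option (Fin (k+2)) :=
      (fun t => if t ∈ B then some 0 else if t ∈ A then some 1 else g t) with hfB
    have hfB0 : ∀ t, fB t = some 0 ↔ t ∈ B := by
      intro t
      rw [hfB]
      by_cases ht : t ∈ B
      · simp [ht]
      · simp only [if_neg ht]
        by_cases ht2 : t ∈ A
        · simp only [if_pos ht2]
          constructor
          · intro h; exact absurd h.symm h01
          · intro h; exact absurd h ht
        · simp only [if_neg ht2]
          constructor
          · intro h; exact absurd ((hmemA t).2 h) ht2
          · intro h; exact absurd h ht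
    have hfB1 : ∀ t, fB t = some 1 ↔ (t ∈ A ∧ t ∉ B) := by
      intro t
      rw [hfB]
      by_cases ht : t ∈ B
      · simp only [if_pos ht]
        constructor
        · intro h; exact absurd h h01
        · rintro ⟨-, h⟩; exact absurd ht h
      · simp only [if_neg ht]
        by_cases ht2 : t ∈ A
        · simp [ht2, ht]
        · simp only [if_neg ht2]
          constructor
          · intro h; exact absurd h (hg t)
          · rintro ⟨h, -⟩; exact absurd h ht2
    have hfBout : ∀ t ∉ A, fB t = g t := by
      intro t ht
      rw [hfB]
      simp only [if_neg (fun h => ht (hB h)), if_neg ht]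
    -- load counts
    have hl0 : loadCount fB 0 = B.card := by
      unfold loadCount
      congr 1
      ext t
      simp only [Finset.mem_filter, Finset.mem_univ, true_and]
      exact hfB0 t
    have hl1 : loadCount fB 1 = A.card - B.card := by
      unfold loadCount
      rw [← Finset.card_sdiff_of_subset hB]
      congr 1
      ext t
      simp only [Finset.mem_filter, Finset.mem_univ, true_and, Finset.mem_sdiff]
      exact hfB1 t
    have hlo : ∀ i ∈ others k, loadCount fB i = loadCount g i := by
      intro i hi
      rw [others] at hi
      simp only [Finset.mem_erase] at hi
      obtain ⟨hi1, hi0, -⟩ := hi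
      unfold loadCount
      congr 1
      ext t
      simp only [Finset.mem_filter, Finset.mem_univ, true_and]
      constructor
      · intro h
        by_cases htB : t ∈ B
        · exfalso
          have hEq : fB t = some 0 := (hfB0 t).2 htB
          rw [hEq] at h
          exact hi0 (Option.some.inj h).symm
        · by_cases htA : t ∈ A
          · exfalso
            have hEq : fB t = some 1 := (hfB1 t).2 ⟨htA, htB⟩
            rw [hEq] at h
            exact hi1 (Option.some.inj h).symm
          · rw [← hfBout t htA]; exact h
      · intro h
        have ht : t ∉ A := by
          intro hta
          have hg0 := (hmemA t).1 hta
          rw [hg0] at h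
          exact hi0 (Option.some.inj h).symm
        rw [hfBout t ht]; exact h
    -- sup
    have hsup : (Finset.univ.sup (loadCount fB) : ℕ)
        = max ((others k).sup (loadCount g)) (max B.card (A.card - B.card)) := by
      have huniv : (Finset.univ : Finset (Fin (k+2))) = insert 0 (insert 1 (others k)) := by
        rw [others]
        ext i
        simp only [Finset.mem_univ, Finset.mem_insert, Finset.mem_erase, true_iff]
        tauto
      rw [huniv, Finset.sup_insert, Finset.sup_insert, hl0, hl1]
      rw [Finset.sup_congr rfl hlo]
      rw [max_comm ((others k).sup (loadCount g)) _, max_assoc]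
    -- product
    have hprod : (∏ t, q (fB t))
        = (∏ t ∈ Aᶜ, q (g t)) * (q (some 0) ^ B.card * q (some 1) ^ (A.card - B.card)) := by
      rw [← Finset.prod_mul_prod_compl A (fun t => q (fB t))]
      have hout : (∏ t ∈ Aᶜ, q (fB t)) = ∏ t ∈ Aᶜ, q (g t) := by
        refine Finset.prod_congr rfl fun t ht => ?_
        rw [hfBout t (by simpa using ht)]
      have hin : (∏ t ∈ A, q (fB t)) = q (some 0) ^ B.card * q (some 1) ^ (A.card - B.card) := by
        rw [← Finset.prod_sdiff hB]
        have h1 : (∏ t ∈ A \ B, q (fB t)) = q (some 1) ^ (A.card - B.card) := by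
          rw [← Finset.card_sdiff_of_subset hB, ← Finset.prod_const]
          refine Finset.prod_congr rfl fun t ht => ?_
          rw [(hfB1 t).2 (by simpa [Finset.mem_sdiff] using ht)]
        have h2 : (∏ t ∈ B, q (fB t)) = q (some 0) ^ B.card := by
          rw [← Finset.prod_const]
          refine Finset.prod_congr rfl fun t ht => ?_
          rw [(hfB0 t).2 ht]
        rw [h1, h2]
        ring
      rw [hout, hin]
      ring
    rw [hprod, hsup]
    ring

private lemma fiber_empty (T k : ℕ) (q : Option (Fin (k+2)) → ℝ)
    (g : Fin T → Option (Fin (k+2))) (hg : ¬ (∀ t, g t ≠ some 1)) :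
    ∑ f ∈ Finset.univ.filter
        (fun f : Fin T → Option (Fin (k+2)) => collapse ∘ f = g),
      (∏ t, q (f t)) * ((Finset.univ.sup (loadCount f) : ℕ) : ℝ) = 0 := by
  have hfil : Finset.univ.filter
      (fun f : Fin T → Option (Fin (k+2)) => collapse ∘ f = g) = ∅ := by
    rw [Finset.filter_eq_empty_iff]
    intro f _ hf
    push_neg at hg
    obtain ⟨t, ht⟩ := hg
    exact collapse_ne_one (f t) (by
      have := congrFun hf t
      simp only [Function.comp_apply] at this
      rw [this]; exact ht)
  rw [hfil, Finset.sum_empty]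

private lemma ET_decomp (T k : ℕ) (q : Option (Fin (k+2)) → ℝ) :
    ∑ f : Fin T → Option (Fin (k+2)),
        (∏ t, q (f t)) * ((Finset.univ.sup (loadCount f) : ℕ) : ℝ)
    = ∑ g ∈ Finset.univ.filter (fun g : Fin T → Option (Fin (k+2)) => ∀ t, g t ≠ some 1),
        ∑ B ∈ (Finset.univ.filter (fun t => g t = some 0)).powerset,
          (∏ t ∈ (Finset.univ.filter (fun t => g t = some 0))ᶜ, q (g t)) *
          (q (some 0) ^ B.card
            * q (some 1) ^ ((Finset.univ.filter (fun t => g t = some 0)).card - B.card)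
            * ((max ((others k).sup (loadCount g))
                (max B.card
                  ((Finset.univ.filter (fun t => g t = some 0)).card - B.card)) : ℕ) : ℝ)) := by
  rw [← Finset.sum_fiberwise_of_maps_to
      (g := fun f : Fin T → Option (Fin (k+2)) => collapse ∘ f)
      (t := Finset.univ) (fun f _ => Finset.mem_univ _)
      (fun f => (∏ t, q (f t)) * ((Finset.univ.sup (loadCount f) : ℕ) : ℝ))]
  rw [← Finset.sum_filter_add_sum_filter_not Finset.univ
      (fun g : Fin T → Option (Fin (k+2)) => ∀ t, g t ≠ some 1)]
  have hbad : ∑ g ∈ Finset.univ.filter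
      (fun g : Fin T → Option (Fin (k+2)) => ¬ ∀ t, g t ≠ some 1),
      ∑ f ∈ Finset.univ.filter
        (fun f : Fin T → Option (Fin (k+2)) => collapse ∘ f = g),
        (∏ t, q (f t)) * ((Finset.univ.sup (loadCount f) : ℕ) : ℝ) = 0 := by
    refine Finset.sum_eq_zero fun g hg => ?_
    simp only [Finset.mem_filter] at hg
    exact fiber_empty T k q g hg.2
  rw [hbad, add_zero]
  refine Finset.sum_congr rfl fun g hg => ?_
  simp only [Finset.mem_filter] at hg
  exact fiber_sum T k q g hg.2

/-- Transferring weight `δ` from a lighter product (index `1`) to a heavier product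
(index `0`) cannot decrease the expected maximum load. -/
theorem transfer_does_not_decrease_expected_max_load
    (T k : ℕ) (w : Fin (k + 2) → ℝ) (hw : ∀ i, 0 < w i) (h12 : w 1 ≤ w 0)
    (δ : ℝ) (hδ0 : 0 ≤ δ) (hδ1 : δ ≤ w 1) :
    ET T (k + 2) (fun i => if i = 0 then w 0 + δ else if i = 1 then w 1 - δ else w i) ≥
      ET T (k + 2) w := by
  set w' : Fin (k+2) → ℝ :=
    fun i => if i = 0 then w 0 + δ else if i = 1 then w 1 - δ else w i with hw'
  have h01 : (0 : Fin (k+2)) ≠ 1 := by simp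
  have hsum : ∑ j, w' j = ∑ j, w j := by
    have hpt : ∀ i, w' i = w i + ((if i = 0 then δ else 0) - (if i = 1 then δ else 0)) := by
      intro i
      simp only [hw']
      by_cases h0 : i = 0
      · subst h0; rw [if_pos rfl, if_pos rfl, if_neg h01]; ring
      · rw [if_neg h0]
        simp only [if_neg h0]
        by_cases h1 : i = 1
        · subst h1; rw [if_pos rfl, if_pos rfl]; ring
        · rw [if_neg h1, if_neg h1]; ring
    rw [Finset.sum_congr rfl (fun i _ => hpt i), Finset.sum_add_distrib,
      Finset.sum_sub_distrib,
      Finset.sum_ite_eq' Finset.univ (0 : Fin (k+2)) (fun _ => δ),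
      Finset.sum_ite_eq' Finset.univ (1 : Fin (k+2)) (fun _ => δ)]
    simp
  set S : ℝ := 1 + ∑ j, w j with hS
  have hS0 : 0 < S := by
    have h := Finset.sum_nonneg (fun i (_ : i ∈ Finset.univ) => (hw i).le)
    rw [hS]; linarith
  have hprob : ∀ y : Option (Fin (k+2)), y ≠ some 0 → y ≠ some 1 →
      mnlProb w' y = mnlProb w y := by
    intro y hy0 hy1
    rcases y with _ | i
    · show 1 / (1 + ∑ j, w' j) = 1 / (1 + ∑ j, w j)
      rw [hsum]
    · have hi0 : i ≠ 0 := fun h => hy0 (by rw [h])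
      have hi1 : i ≠ 1 := fun h => hy1 (by rw [h])
      show w' i / (1 + ∑ j, w' j) = w i / (1 + ∑ j, w j)
      rw [hsum, hw']
      simp only [if_neg hi0, if_neg hi1]
  have hprob_nonneg : ∀ y, 0 ≤ mnlProb w y := by
    intro y
    rcases y with _ | i
    · show 0 ≤ 1 / (1 + ∑ j, w j)
      rw [← hS]; positivity
    · show 0 ≤ w i / (1 + ∑ j, w j)
      rw [← hS]; exact div_nonneg (hw i).le hS0.le
  rw [ge_iff_le]
  show ET T (k+2) w ≤ ET T (k+2) w'
  unfold ET
  rw [ET_decomp T k (mnlProb w), ET_decomp T k (mnlProb w')]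
  apply Finset.sum_le_sum
  intro g hg
  simp only [Finset.mem_filter, Finset.mem_univ, true_and] at hg
  set A : Finset (Fin T) := Finset.univ.filter (fun t => g t = some 0) with hA
  have hPout : (∏ t ∈ Aᶜ, mnlProb w' (g t)) = ∏ t ∈ Aᶜ, mnlProb w (g t) := by
    refine Finset.prod_congr rfl fun t ht => ?_
    have ht' : g t ≠ some 0 := by
      rw [Finset.mem_compl, hA] at ht
      simpa using ht
    exact hprob (g t) ht' (hg t)
  rw [hPout, ← Finset.mul_sum, ← Finset.mul_sum]
  apply mul_le_mul_of_nonneg_left _ (Finset.prod_nonneg fun t _ => hprob_nonneg (g t))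
  rw [Finset.sum_powerset_apply_card (fun j => mnlProb w (some 0) ^ j
        * mnlProb w (some 1) ^ (A.card - j)
        * ((max ((others k).sup (loadCount g)) (max j (A.card - j)) : ℕ) : ℝ)),
      Finset.sum_powerset_apply_card (fun j => mnlProb w' (some 0) ^ j
        * mnlProb w' (some 1) ^ (A.card - j)
        * ((max ((others k).sup (loadCount g)) (max j (A.card - j)) : ℕ) : ℝ))]
  simp only [nsmul_eq_mul]
  have hv0 : mnlProb w (some 0) = w 0 / S := rfl
  have hv1 : mnlProb w (some 1) = w 1 / S := rfl
  have hw0' : w' 0 = w 0 + δ := by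
    simp only [hw']
    simp
  have hw1' : w' 1 = w 1 - δ := by
    simp only [hw']
    simp [Ne.symm h01]
  have hv0' : mnlProb w' (some 0) = w 0 / S + δ / S := by
    show w' 0 / (1 + ∑ j, w' j) = _
    rw [hsum, ← hS, hw0', add_div]
  have hv1' : mnlProb w' (some 1) = w 1 / S - δ / S := by
    show w' 1 / (1 + ∑ j, w' j) = _
    rw [hsum, ← hS, hw1', sub_div]
  rw [hv0, hv1, hv0', hv1']
  have hcore := core A.card ((others k).sup (loadCount g)) (w 0 / S) (w 1 / S) (δ / S)
    (div_nonneg hδ0 hS0.le)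
    ((div_le_div_iff_of_pos_right hS0).mpr hδ1)
    ((div_le_div_iff_of_pos_right hS0).mpr h12)
  calc ∑ j ∈ Finset.range (A.card + 1), (A.card.choose j : ℝ)
        * ((w 0 / S) ^ j * (w 1 / S) ^ (A.card - j)
          * ((max ((others k).sup (loadCount g)) (max j (A.card - j)) : ℕ) : ℝ))
      = ∑ j ∈ Finset.range (A.card + 1), (A.card.choose j : ℝ)
        * (w 0 / S) ^ j * (w 1 / S) ^ (A.card - j)
        * ((max ((others k).sup (loadCount g)) (max j (A.card - j)) : ℕ) : ℝ) := by
        refine Finset.sum_congr rfl fun j _ => by ring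
    _ ≤ ∑ j ∈ Finset.range (A.card + 1), (A.card.choose j : ℝ)
        * (w 0 / S + δ / S) ^ j * (w 1 / S - δ / S) ^ (A.card - j)
        * ((max ((others k).sup (loadCount g)) (max j (A.card - j)) : ℕ) : ℝ) := hcore
    _ = ∑ j ∈ Finset.range (A.card + 1), (A.card.choose j : ℝ)
        * ((w 0 / S + δ / S) ^ j * (w 1 / S - δ / S) ^ (A.card - j)
          * ((max ((others k).sup (loadCount g)) (max j (A.card - j)) : ℕ) : ℝ)) := by
        refine Finset.sum_congr rfl fun j _ => by ring
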